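/- If a chain code U over the alphabet {L, R, S} satisfies qturn(P) ∈ {-1, 0, 1} for every prefix P of U, then the unfolding dual path of U (the orthogonal unit-step lattice path starting at (0,0) heading in direction (0,1), where L turns left, R turns right, and S continues straight) visits pairwise distinct lattice points. -/

import Mathlib

inductive TurnSym : Type
  | L | R | S
deriving DecidableEq

def qt : TurnSym → ℤ
  | TurnSym.L => -1
  | TurnSym.R => 1
  | TurnSym.S => 0

def qturn (U : List TurnSym) : ℤ := (U.map qt).sum

def rot : TurnSym → ℤ × ℤ → ℤ × ℤ
  | TurnSym.R, d => (d.2, -d.1)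
  | TurnSym.L, d => (-d.2, d.1)
  | TurnSym.S, d => d

def pathStep (s : (ℤ × ℤ) × (ℤ × ℤ)) (a : TurnSym) : (ℤ × ℤ) × (ℤ × ℤ) :=
  let d := rot a s.2
  (s.1 + d, d)

/-- Points p_0 = (0,0), p_1 = (0,1), ..., p_{n+1} of the unfolding dual path. -/
def pts (U : List TurnSym) : List (ℤ × ℤ) :=
  (0, 0) :: (List.scanl pathStep ((0, 1), (0, 1)) U).map Prod.fst

/-- 90° clockwise rotation. -/
def cw (d : ℤ × ℤ) : ℤ × ℤ := (d.2, -d.1)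

/-- Final heading after processing a chain code from initial heading (0,1). -/
def headAfter (U : List TurnSym) : ℤ × ℤ := U.foldl (fun d a => rot a d) (0, 1)

/-- Reflection of a chain code: swap L and R. -/
def reflCode (U : List TurnSym) : List TurnSym :=
  U.map fun a => match a with
    | TurnSym.L => TurnSym.R
    | TurnSym.R => TurnSym.L
    | TurnSym.S => TurnSym.S

/-- Action of a chain code on an arbitrary initial heading. -/
def act (U : List TurnSym) (d : ℤ × ℤ) : ℤ × ℤ := U.foldl (fun d a => rot a d) d

/-! ### Auxiliary machinery -/

lemma act_concat (U : List TurnSym) (a : TurnSym) (d : ℤ × ℤ) :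
    act (U ++ [a]) d = rot a (act U d) := by
  simp [act]

lemma qturn_concat (U : List TurnSym) (a : TurnSym) :
    qturn (U ++ [a]) = qturn U + qt a := by
  simp [qturn]

/-- Heading before the `(j+1)`-st step. -/
def Dv (U : List TurnSym) (j : ℕ) : ℤ × ℤ := act (U.take j) (0, 1)

/-- The `i`-th point of the unfolding dual path, as a sum of headings. -/
def Qp (U : List TurnSym) (i : ℕ) : ℤ × ℤ := ∑ j ∈ Finset.range i, Dv U j

lemma Dv_of_concat (U : List TurnSym) (a : TurnSym) {j : ℕ} (hj : j ≤ U.length) :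
    Dv (U ++ [a]) j = Dv U j := by
  simp [Dv, List.take_append_of_le_length hj]

lemma Qp_of_concat (U : List TurnSym) (a : TurnSym) {i : ℕ} (hi : i ≤ U.length + 1) :
    Qp (U ++ [a]) i = Qp U i := by
  unfold Qp
  refine Finset.sum_congr rfl fun j hj => ?_
  exact Dv_of_concat U a (by have := Finset.mem_range.1 hj; omega)

lemma scanl_concat {α β : Type*} (f : β → α → β) (b : β) (l : List α) (a : α) :
    List.scanl f b (l ++ [a]) = List.scanl f b l ++ [List.foldl f b (l ++ [a])] := by
  induction l generalizing b with
  | nil => simp [List.scanl]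
  | cons x xs ih => simp [List.scanl_cons, ih]

lemma foldl_pathStep (U : List TurnSym) :
    List.foldl pathStep ((0, 1), (0, 1)) U = (Qp U (U.length + 1), act U (0, 1)) := by
  induction U using List.reverseRecOn with
  | nil => simp [Qp, Dv, act]
  | append_singleton U a ih =>
      rw [List.foldl_append, ih]
      have hlen : (U ++ [a]).length = U.length + 1 := by simp
      have htake : (U ++ [a]).take (U.length + 1) = U ++ [a] := by
        rw [← hlen, List.take_length]
      have hD : Dv (U ++ [a]) (U.length + 1) = rot a (act U (0, 1)) := by
        rw [Dv, htake, act_concat]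
      have : Qp (U ++ [a]) (U.length + 2) = Qp U (U.length + 1) + rot a (act U (0, 1)) := by
        rw [Qp, Finset.sum_range_succ, ← Qp, Qp_of_concat U a le_rfl, hD]
      rw [hlen, this, act_concat]
      rfl

lemma pts_eq (U : List TurnSym) :
    pts U = (List.range (U.length + 2)).map (Qp U) := by
  induction U using List.reverseRecOn with
  | nil =>
      simp [pts, List.scanl, List.range_succ, Qp, Dv, act]
  | append_singleton U a ih =>
      have hlen : (U ++ [a]).length = U.length + 1 := by simp
      rw [pts, scanl_concat, List.map_append, foldl_pathStep]
      have e1 : (0, 0) :: ((List.scanl pathStep ((0, 1), (0, 1)) U).map Prod.fst ++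
          [(Qp (U ++ [a]) ((U ++ [a]).length + 1), act (U ++ [a]) (0, 1)).1])
          = pts U ++ [Qp (U ++ [a]) ((U ++ [a]).length + 1)] := by
        simp [pts]
      rw [List.map_singleton, e1, ih, hlen]
      rw [show U.length + 1 + 2 = (U.length + 2) + 1 from rfl]
      conv_rhs => rw [List.range_succ]
      rw [List.map_append]
      congr 1
      · refine List.map_congr_left fun i hi => ?_
        have hi' : i < U.length + 2 := List.mem_range.1 hi
        exact (Qp_of_concat U a (by omega)).symm

lemma qt_mem (a : TurnSym) : qt a = -1 ∨ qt a = 0 ∨ qt a = 1 := by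
  cases a <;> simp [qt]

lemma rot_step (a : TurnSym) (q : ℤ) (h1 : q = -1 ∨ q = 0 ∨ q = 1)
    (h2 : q + qt a = -1 ∨ q + qt a = 0 ∨ q + qt a = 1) :
    rot a (q, 1 - |q|) = (q + qt a, 1 - |q + qt a|) := by
  cases a <;> rcases h1 with rfl | rfl | rfl <;>
    simp [rot, qt] at h2 ⊢

lemma Dv_eq (U : List TurnSym)
    (h : ∀ P, P <+: U → qturn P ∈ ({-1, 0, 1} : Set ℤ)) :
    ∀ j, j ≤ U.length → Dv U j = (qturn (U.take j), 1 - |qturn (U.take j)|) := by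
  have hmem : ∀ j : ℕ, qturn (U.take j) = -1 ∨ qturn (U.take j) = 0 ∨ qturn (U.take j) = 1 := by
    intro j
    have := h _ (List.take_prefix j U)
    simpa [Set.mem_insert_iff] using this
  intro j
  induction j with
  | zero => intro _; simp [Dv, act, qturn]
  | succ j ih =>
      intro hj
      have hj' : j < U.length := by omega
      have hstep : U.take (j + 1) = U.take j ++ [U.get ⟨j, hj'⟩] := by
        rw [List.take_succ, List.getElem?_eq_getElem hj']
        rfl
      have hq : qturn (U.take (j + 1)) = qturn (U.take j) + qt (U.get ⟨j, hj'⟩) := by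
        rw [hstep, qturn_concat]
      have hDv : Dv U (j + 1) = rot (U.get ⟨j, hj'⟩) (Dv U j) := by
        rw [Dv, Dv, hstep, act_concat]
      rw [hDv, ih (le_of_lt hj'), hq]
      exact rot_step _ _ (hmem j) (hq ▸ hmem (j + 1))

theorem stmt0 (U : List TurnSym)
    (h : ∀ P, P <+: U → qturn P ∈ ({-1, 0, 1} : Set ℤ)) :
    (pts U).Nodup := by
  set t : ℕ → ℤ := fun j => qturn (U.take j) with ht
  have hmem : ∀ j : ℕ, t j = -1 ∨ t j = 0 ∨ t j = 1 := by
    intro j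
    have := h _ (List.take_prefix j U)
    simpa [Set.mem_insert_iff, ht] using this
  have hD : ∀ j, j ≤ U.length → Dv U j = (t j, 1 - |t j|) := Dv_eq U h
  have key : ∀ i k : ℕ, i < k → k ≤ U.length + 1 → Qp U i ≠ Qp U k := by
    intro i k hik hk heq
    -- bound on indices inside Ico i k
    have hjle : ∀ j ∈ Finset.Ico i k, j ≤ U.length := by
      intro j hj
      have := Finset.mem_Ico.1 hj
      omega
    -- second coordinates
    have hfst : (Qp U k).1 - (Qp U i).1 = ∑ j ∈ Finset.Ico i k, (Dv U j).1 := by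
      rw [Qp, Qp, Prod.fst_sum, Prod.fst_sum, Finset.range_eq_Ico, Finset.range_eq_Ico,
        ← Finset.sum_Ico_consecutive (fun j => (Dv U j).1) (Nat.zero_le i) (le_of_lt hik)]
      ring
    have hsnd : (Qp U k).2 - (Qp U i).2 = ∑ j ∈ Finset.Ico i k, (Dv U j).2 := by
      rw [Qp, Qp, Prod.snd_sum, Prod.snd_sum, Finset.range_eq_Ico, Finset.range_eq_Ico,
        ← Finset.sum_Ico_consecutive (fun j => (Dv U j).2) (Nat.zero_le i) (le_of_lt hik)]
      ring
    have hsnd0 : ∑ j ∈ Finset.Ico i k, (Dv U j).2 = 0 := by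
      rw [← hsnd, heq]; ring
    have hfst0 : ∑ j ∈ Finset.Ico i k, (Dv U j).1 = 0 := by
      rw [← hfst, heq]; ring
    -- all headings in [i,k) are horizontal
    have hhor : ∀ j ∈ Finset.Ico i k, t j = -1 ∨ t j = 1 := by
      have hterm : ∀ j ∈ Finset.Ico i k, (Dv U j).2 = 0 := by
        refine (Finset.sum_eq_zero_iff_of_nonneg ?_).1 hsnd0
        intro j hj
        rw [hD j (hjle j hj)]
        have := hmem j
        simp only []
        rcases this with h' | h' | h' <;> rw [h'] <;> norm_num
      intro j hj
      have := hterm j hj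
      rw [hD j (hjle j hj)] at this
      rcases hmem j with h' | h' | h' <;> rw [h'] at this <;> norm_num at this <;> omega
    -- heading constant on [i,k)
    have himem : i ∈ Finset.Ico i k := Finset.mem_Ico.2 ⟨le_rfl, hik⟩
    have hconst : ∀ j, i ≤ j → j < k → t j = t i := by
      intro j hij
      induction j, hij using Nat.le_induction with
      | base => intro _; rfl
      | succ j hij ihj =>
          intro hjk
          have hj1 : j < k := by omega
          have e1 : t j = t i := ihj hj1
          have hlen : j < U.length := by omega
          have hstep : U.take (j + 1) = U.take j ++ [U.get ⟨j, hlen⟩] := by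
            rw [List.take_succ, List.getElem?_eq_getElem hlen]
            rfl
          have hq : t (j + 1) = t j + qt (U.get ⟨j, hlen⟩) := by
            simp only [ht]
            rw [hstep, qturn_concat]
          have hqt := qt_mem (U.get ⟨j, hlen⟩)
          have hA := hhor j (Finset.mem_Ico.2 ⟨hij, hj1⟩)
          have hB := hhor (j + 1) (Finset.mem_Ico.2 ⟨by omega, hjk⟩)
          omega
    -- first coordinate sum is (k-i) * t i ≠ 0
    have hsum : ∑ j ∈ Finset.Ico i k, (Dv U j).1 = (k - i : ℕ) * t i := by
      have : ∀ j ∈ Finset.Ico i k, (Dv U j).1 = t i := by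
        intro j hj
        have hj' := Finset.mem_Ico.1 hj
        rw [hD j (hjle j hj)]
        exact hconst j hj'.1 hj'.2
      rw [Finset.sum_congr rfl this, Finset.sum_const, Nat.card_Ico, nsmul_eq_mul]
    rw [hfst0] at hsum
    have hki : (0 : ℤ) < (k - i : ℕ) := by
      have : 0 < k - i := by omega
      exact_mod_cast this
    rcases hhor i himem with h' | h' <;> rw [h'] at hsum <;> omega
  rw [pts_eq]
  refine List.Nodup.map_on ?_ List.nodup_range
  intro x hx y hy hxy
  have hx' : x < U.length + 2 := List.mem_range.1 hx
  have hy' : y < U.length + 2 := List.mem_range.1 hy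
  rcases lt_trichotomy x y with hlt | heq | hgt
  · exact absurd hxy (key x y hlt (by omega))
  · exact heq
  · exact absurd hxy.symm (key y x hgt (by omega))
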